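/- A matrix A* ∈ ℝ^{m×n} solves the sum-of-norms problem (i.e., Σ_{t=1}^N ‖y_t − A* x_t‖₂ ≤ Σ_{t=1}^N ‖y_t − A x_t‖₂ for all A ∈ ℝ^{m×n}) if and only if there exist vectors β_t ∈ ℝ^m with ‖β_t‖₂ ≤ 1 for each t ∈ I⁰(A*), such that Σ_{t ∉ I⁰(A*)} v*_t x_t^⊤ + Σ_{t ∈ I⁰(A*)} β_t x_t^⊤ = 0, where v*_t = (y_t − A* x_t)/‖y_t − A* x_t‖₂ for t ∉ I⁰(A*). -/

import Mathlib

open Matrix Finset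

/-- The Euclidean norm on `Fin m → ℝ`. -/
noncomputable def enorm (m : ℕ) (v : Fin m → ℝ) : ℝ :=
  Real.sqrt (∑ i, v i ^ 2)

noncomputable def toE {ι : Type*} [Fintype ι] (v : ι → ℝ) : EuclideanSpace ℝ ι := WithLp.toLp 2 v

lemma toE_apply {ι : Type*} [Fintype ι] (v : ι → ℝ) (i : ι) : toE v i = v i := rfl

lemma enorm_eq_norm {m : ℕ} (v : Fin m → ℝ) : enorm m v = ‖toE v‖ := by
  rw [EuclideanSpace.norm_eq]; simp [_root_.enorm, sq_abs, toE]

lemma dot_eq_inner {m : ℕ} (a b : Fin m → ℝ) : ∑ i, a i * b i = inner ℝ (toE a) (toE b) := by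
  rw [PiLp.inner_apply]; simp [RCLike.inner_apply, toE, mul_comm]

lemma toE_ne_zero {m : ℕ} {v : Fin m → ℝ} (hv : v ≠ 0) : toE v ≠ 0 := by
  intro h
  exact hv (funext fun i => congrArg (fun z => z.ofLp i) h)

lemma real_aux (c I B D : ℝ) (hc : 0 < c) (h1 : D^2 = c^2 - 2*I + B^2) :
    D ≤ c - c⁻¹ * I + c⁻¹ * B^2 := by
  rw [← mul_le_mul_iff_right₀ hc]
  have he : c * (c - c⁻¹*I + c⁻¹*B^2) = c*c - I + B^2 := by field_simp
  rw [he]; nlinarith [sq_nonneg (c - D)]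

lemma normSub_le {m : ℕ} (a b : EuclideanSpace ℝ (Fin m)) (ha : a ≠ 0) :
    ‖a - b‖ ≤ ‖a‖ - inner ℝ (‖a‖⁻¹ • a) b + ‖a‖⁻¹ * ‖b‖^2 := by
  have h0 : (0:ℝ) < ‖a‖ := norm_pos_iff.mpr ha
  have h1 : ‖a - b‖^2 = ‖a‖^2 - 2 * inner ℝ a b + ‖b‖^2 := norm_sub_sq_real a b
  have h2 : (inner ℝ (‖a‖⁻¹ • a) b : ℝ) = ‖a‖⁻¹ * inner ℝ a b := real_inner_smul_left a b _
  rw [h2]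
  exact real_aux _ _ _ _ h0 h1

lemma inner_le_norm_of_le_one {m : ℕ} (g w : EuclideanSpace ℝ (Fin m)) (hg : ‖g‖ ≤ 1) :
    (inner ℝ g w : ℝ) ≤ ‖w‖ := by
  calc (inner ℝ g w : ℝ) ≤ ‖g‖ * ‖w‖ := real_inner_le_norm g w
  _ ≤ 1 * ‖w‖ := mul_le_mul_of_nonneg_right hg (norm_nonneg w)
  _ = ‖w‖ := one_mul _

lemma inner_normalized_self {m : ℕ} (a : EuclideanSpace ℝ (Fin m)) (ha : a ≠ 0) :
    (inner ℝ (‖a‖⁻¹ • a) a : ℝ) = ‖a‖ := by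
  have h0 : (0:ℝ) < ‖a‖ := norm_pos_iff.mpr ha
  rw [real_inner_smul_left, real_inner_self_eq_norm_mul_norm]
  field_simp

lemma enormE_smul {m : ℕ} (c : ℝ) (v : Fin m → ℝ) : enorm m (c • v) = |c| * enorm m v := by
  rw [enorm_eq_norm, enorm_eq_norm]
  have : toE (c • v) = c • toE v := rfl
  rw [this, norm_smul, Real.norm_eq_abs]

lemma enorm_nonneg' {m : ℕ} (v : Fin m → ℝ) : 0 ≤ enorm m v := Real.sqrt_nonneg _

lemma enorm_zero' {m : ℕ} : enorm m (0 : Fin m → ℝ) = 0 := by simp [_root_.enorm]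

-- Cauchy–Schwarz style bound: if `‖g‖ ≤ 1` then `⟨g, w⟩ ≤ ‖w‖`.
lemma bound1 {m : ℕ} (w g : Fin m → ℝ) (hg : enorm m g ≤ 1) :
    ∑ i, g i * w i ≤ enorm m w := by
  rw [dot_eq_inner, enorm_eq_norm]
  exact inner_le_norm_of_le_one _ _ (by rwa [enorm_eq_norm] at hg)

-- subgradient inequality at a nonzero point
lemma bound2 {m : ℕ} (r w : Fin m → ℝ) (hr : r ≠ 0) :
    enorm m r + ∑ i, ((enorm m r)⁻¹ • r) i * w i ≤ enorm m (r + w) := by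
  have htr : toE r ≠ 0 := toE_ne_zero hr
  have h0 : (0:ℝ) < ‖toE r‖ := norm_pos_iff.mpr htr
  have hveq : toE ((enorm m r)⁻¹ • r) = ‖toE r‖⁻¹ • toE r := by
    rw [← enorm_eq_norm]; rfl
  have hv1 : ‖toE ((enorm m r)⁻¹ • r)‖ ≤ 1 := by
    rw [hveq, norm_smul, Real.norm_eq_abs, abs_of_pos (inv_pos.mpr h0),
      inv_mul_cancel₀ h0.ne']
  have key : (inner ℝ (toE ((enorm m r)⁻¹ • r)) (toE r + toE w) : ℝ) ≤ ‖toE r + toE w‖ :=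
    inner_le_norm_of_le_one _ _ hv1
  rw [inner_add_right, hveq] at key
  rw [inner_normalized_self _ htr] at key
  have e1 : enorm m (r + w) = ‖toE r + toE w‖ := by rw [enorm_eq_norm]; rfl
  have e2 : ∑ i, ((enorm m r)⁻¹ • r) i * w i
      = (inner ℝ (‖toE r‖⁻¹ • toE r) (toE w) : ℝ) := by
    rw [dot_eq_inner, hveq]
  rw [e1, e2, enorm_eq_norm]
  linarith

-- quantitative upper bound
lemma bound3 {m : ℕ} (r w : Fin m → ℝ) (hr : r ≠ 0) :
    enorm m (r - w) ≤ enorm m r - ∑ i, ((enorm m r)⁻¹ • r) i * w i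
      + (enorm m r)⁻¹ * (enorm m w)^2 := by
  have htr : toE r ≠ 0 := toE_ne_zero hr
  have hveq : toE ((enorm m r)⁻¹ • r) = ‖toE r‖⁻¹ • toE r := by
    rw [← enorm_eq_norm]; rfl
  have e1 : enorm m (r - w) = ‖toE r - toE w‖ := by rw [enorm_eq_norm]; rfl
  have e2 : ∑ i, ((enorm m r)⁻¹ • r) i * w i
      = (inner ℝ (‖toE r‖⁻¹ • toE r) (toE w) : ℝ) := by
    rw [dot_eq_inner, hveq]
  rw [e1, e2, enorm_eq_norm, enorm_eq_norm]
  exact normSub_le (toE r) (toE w) htr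

lemma sep_lemma {n m N : ℕ} (x : Fin N → Fin n → ℝ) (I : Finset (Fin N))
    (v : Fin N → EuclideanSpace ℝ (Fin m))
    (h : ∀ d : EuclideanSpace ℝ (Fin m × Fin n),
      ∑ t ∈ Iᶜ, (inner ℝ (v t) (toE fun i => ∑ j, d (i, j) * x t j) : ℝ) ≤
      ∑ t ∈ I, ‖toE fun i => ∑ j, d (i, j) * x t j‖) :
    ∃ β : Fin N → EuclideanSpace ℝ (Fin m), (∀ t, ‖β t‖ ≤ 1) ∧
      ∀ i j, (∑ t ∈ Iᶜ, v t i * x t j) + (∑ t ∈ I, β t i * x t j) = 0 := by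
  classical
  set L : (Fin N → EuclideanSpace ℝ (Fin m)) →ₗ[ℝ] EuclideanSpace ℝ (Fin m × Fin n) :=
    { toFun := fun β => toE fun p => ∑ t ∈ I, β t p.1 * x t p.2
      map_add' := by
        intro a b; ext p
        simp [toE, add_mul, Finset.sum_add_distrib]
      map_smul' := by
        intro c a; ext p
        simp [toE, Finset.mul_sum, mul_assoc] } with hL
  set K : Set (Fin N → EuclideanSpace ℝ (Fin m)) :=
    Set.univ.pi (fun _ => Metric.closedBall (0 : EuclideanSpace ℝ (Fin m)) 1) with hK
  have hKconv : Convex ℝ K := convex_pi fun i _ => convex_closedBall _ _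
  have hKcomp : IsCompact K := isCompact_univ_pi fun i => isCompact_closedBall _ _
  have hCconv : Convex ℝ (L '' K) := hKconv.linear_image L
  have hCcomp : IsCompact (L '' K) := hKcomp.image L.continuous_of_finiteDimensional
  set M : EuclideanSpace ℝ (Fin m × Fin n) := toE fun p => -∑ t ∈ Iᶜ, v t p.1 * x t p.2 with hM
  have hMC : M ∈ L '' K := by
    by_contra hnot
    obtain ⟨f, u, hfu, huM⟩ := geometric_hahn_banach_closed_point hCconv hCcomp.isClosed hnot
    set d : EuclideanSpace ℝ (Fin m × Fin n) := (InnerProductSpace.toDual ℝ _).symm f with hd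
    have hfd : ∀ z, (inner ℝ d z : ℝ) = f z := fun z => InnerProductSpace.toDual_symm_apply
    set w : Fin N → EuclideanSpace ℝ (Fin m) :=
      fun t => toE fun i => ∑ j, d (i, j) * x t j with hw
    have hinner : ∀ β : Fin N → EuclideanSpace ℝ (Fin m),
        (inner ℝ d (L β) : ℝ) = ∑ t ∈ I, (inner ℝ (β t) (w t) : ℝ) := by
      intro β
      simp only [PiLp.inner_apply, RCLike.inner_apply, conj_trivial, hL, hw,
        LinearMap.coe_mk, AddHom.coe_mk, toE, WithLp.ofLp_toLp]
      simp_rw [Finset.sum_mul]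
      rw [Finset.sum_comm]
      refine Finset.sum_congr rfl fun t _ => ?_
      rw [Fintype.sum_prod_type]
      refine Finset.sum_congr rfl fun i _ => ?_
      refine Finset.sum_congr rfl fun j _ => by ring
    have hMd : (inner ℝ d M : ℝ) = -∑ t ∈ Iᶜ, (inner ℝ (v t) (w t) : ℝ) := by
      have lhs : (inner ℝ d M : ℝ) = ∑ p : Fin m × Fin n, d p * M p := by
        rw [PiLp.inner_apply]; simp [RCLike.inner_apply, mul_comm]
      rw [lhs]
      have e1 : ∀ p : Fin m × Fin n, d p * M p = -∑ t ∈ Iᶜ, v t p.1 * (d p * x t p.2) := by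
        intro p
        simp only [hM, toE, mul_neg, Finset.mul_sum]
        congr 1
        exact Finset.sum_congr rfl fun t _ => by ring
      simp_rw [e1, Finset.sum_neg_distrib]
      rw [neg_inj, Finset.sum_comm]
      refine Finset.sum_congr rfl fun t _ => ?_
      rw [PiLp.inner_apply]
      simp only [RCLike.inner_apply, conj_trivial, hw, toE]
      rw [Fintype.sum_prod_type]
      refine Finset.sum_congr rfl fun i _ => ?_
      rw [Finset.sum_mul]
      exact Finset.sum_congr rfl fun j _ => by ring
    set γ : Fin N → EuclideanSpace ℝ (Fin m) :=
      fun t => if hwt : w t = 0 then 0 else ‖w t‖⁻¹ • w t with hγ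
    have hγK : γ ∈ K := by
      intro t _
      simp only [Metric.mem_closedBall, dist_zero_right]
      by_cases hwt : w t = 0
      · simp [hγ, hwt]
      · have h0 : (0:ℝ) < ‖w t‖ := norm_pos_iff.mpr hwt
        have e2 : γ t = ‖w t‖⁻¹ • w t := by simp [hγ, hwt]
        rw [e2, norm_smul]
        simp [abs_of_pos (inv_pos.mpr h0), inv_mul_cancel₀ h0.ne']
    have hγval : ∀ t, (inner ℝ (γ t) (w t) : ℝ) = ‖w t‖ := by
      intro t
      by_cases hwt : w t = 0
      · simp [hγ, hwt]
      · have e2 : γ t = ‖w t‖⁻¹ • w t := by simp [hγ, hwt]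
        rw [e2, inner_normalized_self _ hwt]
    have hkey : -∑ t ∈ Iᶜ, (inner ℝ (v t) (w t) : ℝ) ≤ ∑ t ∈ I, ‖w t‖ := by
      have key := h (-d)
      have e : ∀ t, (toE fun i => ∑ j, (-d) (i, j) * x t j) = -(w t) := by
        intro t; ext i
        simp [toE, hw, neg_mul, Finset.sum_neg_distrib]
      simp only [e, inner_neg_right, norm_neg, Finset.sum_neg_distrib] at key
      linarith
    have h1 : f (L γ) < u := hfu _ ⟨γ, hγK, rfl⟩
    have h2 : f (L γ) = ∑ t ∈ I, ‖w t‖ := by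
      rw [← hfd, hinner]
      exact Finset.sum_congr rfl fun t _ => hγval t
    have h3 : f M = -∑ t ∈ Iᶜ, (inner ℝ (v t) (w t) : ℝ) := by rw [← hfd, hMd]
    linarith [huM]
  obtain ⟨β, hβK, hLβ⟩ := hMC
  refine ⟨β, fun t => ?_, fun i j => ?_⟩
  · have := hβK t (Set.mem_univ t)
    simpa [hK, mem_closedBall_zero_iff] using this
  · have h2 : (L β) (i, j) = M (i, j) := by rw [hLβ]
    simp only [hL, hM, LinearMap.coe_mk, AddHom.coe_mk, toE] at h2
    linarith

/-- `A*` solves the sum-of-norms problem iff there exist vectors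
`β_t` with `‖β_t‖₂ ≤ 1` for `t ∈ I⁰(A*)` such that
`∑_{t ∉ I⁰(A*)} v*_t x_t^⊤ + ∑_{t ∈ I⁰(A*)} β_t x_t^⊤ = 0`, where
`v*_t = (y_t − A* x_t)/‖y_t − A* x_t‖₂`. -/
theorem stmt17 (n m N : ℕ) (hn : 1 ≤ n) (hm : 1 ≤ m) (hN : 1 ≤ N)
    (x : Fin N → Fin n → ℝ) (y : Fin N → Fin m → ℝ)
    (As : Matrix (Fin m) (Fin n) ℝ) :
    (∀ A : Matrix (Fin m) (Fin n) ℝ,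
        ∑ t, enorm m (y t - As *ᵥ x t) ≤ ∑ t, enorm m (y t - A *ᵥ x t)) ↔
      (∃ β : Fin N → Fin m → ℝ,
        (∀ t ∈ univ.filter (fun t => y t = As *ᵥ x t), enorm m (β t) ≤ 1) ∧
        (∑ t ∈ (univ.filter (fun t => y t = As *ᵥ x t))ᶜ,
            Matrix.vecMulVec ((enorm m (y t - As *ᵥ x t))⁻¹ • (y t - As *ᵥ x t)) (x t))
          + (∑ t ∈ univ.filter (fun t => y t = As *ᵥ x t),
              Matrix.vecMulVec (β t) (x t)) = 0) := by
  classical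
  set I : Finset (Fin N) := univ.filter (fun t => y t = As *ᵥ x t) with hI
  set r : Fin N → Fin m → ℝ := fun t => y t - As *ᵥ x t with hr
  have hrI : ∀ t, t ∈ I ↔ r t = 0 := by
    intro t; simp [hI, hr, sub_eq_zero, eq_comm]
  constructor
  · intro hopt
    -- Step 1: directional-derivative inequality
    have KI : ∀ D : Matrix (Fin m) (Fin n) ℝ,
        ∑ t ∈ Iᶜ, ∑ i, ((enorm m (r t))⁻¹ • r t) i * (D *ᵥ x t) i ≤
        ∑ t ∈ I, enorm m (D *ᵥ x t) := by
      intro D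
      set S := ∑ t ∈ Iᶜ, ∑ i, ((enorm m (r t))⁻¹ • r t) i * (D *ᵥ x t) i with hS
      set T := ∑ t ∈ I, enorm m (D *ᵥ x t) with hT
      set Cst := ∑ t ∈ Iᶜ, (enorm m (r t))⁻¹ * (enorm m (D *ᵥ x t))^2 with hCst
      have hCst0 : 0 ≤ Cst := by
        refine Finset.sum_nonneg fun t _ => ?_
        have := enorm_nonneg' (r t)
        have := enorm_nonneg' (D *ᵥ x t)
        positivity
      have hεS : ∀ ε : ℝ, 0 < ε → S ≤ T + ε * Cst := by
        intro ε hε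
        have hA := hopt (As + ε • D)
        have hsub : ∀ t, y t - (As + ε • D) *ᵥ x t = r t - ε • (D *ᵥ x t) := by
          intro t
          rw [hr]
          rw [Matrix.add_mulVec, Matrix.smul_mulVec]
          beta_reduce
          abel
        simp only [hsub] at hA
        -- split the RHS
        have hIc : ∑ t ∈ Iᶜ, enorm m (r t - ε • (D *ᵥ x t)) ≤
            ∑ t ∈ Iᶜ, (enorm m (r t)
              - ε * (∑ i, ((enorm m (r t))⁻¹ • r t) i * (D *ᵥ x t) i)
              + ε^2 * ((enorm m (r t))⁻¹ * (enorm m (D *ᵥ x t))^2)) := by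
          refine Finset.sum_le_sum fun t ht => ?_
          have hrt : r t ≠ 0 := by
            intro hh
            exact (Finset.mem_compl.mp ht) ((hrI t).mpr hh)
          have hb := bound3 (r t) (ε • (D *ᵥ x t)) hrt
          have e1 : ∑ i, ((enorm m (r t))⁻¹ • r t) i * (ε • (D *ᵥ x t)) i
              = ε * ∑ i, ((enorm m (r t))⁻¹ • r t) i * (D *ᵥ x t) i := by
            rw [Finset.mul_sum]
            refine Finset.sum_congr rfl fun i _ => ?_
            simp [Pi.smul_apply, smul_eq_mul]; ring
          have e2 : (enorm m (r t))⁻¹ * (enorm m (ε • (D *ᵥ x t)))^2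
              = ε^2 * ((enorm m (r t))⁻¹ * (enorm m (D *ᵥ x t))^2) := by
            rw [enormE_smul, abs_of_pos hε]; ring
          rw [e1, e2] at hb
          linarith
        have hIe : ∑ t ∈ I, enorm m (r t - ε • (D *ᵥ x t)) = ε * T := by
          rw [hT, Finset.mul_sum]
          refine Finset.sum_congr rfl fun t ht => ?_
          have hrt : r t = 0 := (hrI t).mp ht
          rw [hrt, zero_sub]
          have : -(ε • (D *ᵥ x t)) = (-ε) • (D *ᵥ x t) := by
            funext i; simp
          rw [this, enormE_smul, abs_neg, abs_of_pos hε]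
        have hsplit : ∀ f : Fin N → ℝ, ∑ t, f t = ∑ t ∈ I, f t + ∑ t ∈ Iᶜ, f t :=
          fun f => (Finset.sum_add_sum_compl I f).symm
        rw [hsplit (fun t => enorm m (r t)), hsplit (fun t => enorm m (r t - ε • (D *ᵥ x t)))] at hA
        have hIzero : ∑ t ∈ I, enorm m (r t) = 0 := by
          refine Finset.sum_eq_zero fun t ht => ?_
          rw [(hrI t).mp ht, enorm_zero']
        rw [hIzero, hIe] at hA
        have hsum_sub : ∑ t ∈ Iᶜ, (enorm m (r t)
              - ε * (∑ i, ((enorm m (r t))⁻¹ • r t) i * (D *ᵥ x t) i)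
              + ε^2 * ((enorm m (r t))⁻¹ * (enorm m (D *ᵥ x t))^2))
            = ∑ t ∈ Iᶜ, enorm m (r t) - ε * S + ε^2 * Cst := by
          rw [Finset.sum_add_distrib, Finset.sum_sub_distrib, hS, hCst,
            Finset.mul_sum, Finset.mul_sum]
        rw [hsum_sub] at hIc
        have : 0 + ∑ t ∈ Iᶜ, enorm m (r t) ≤ ε * T + (∑ t ∈ Iᶜ, enorm m (r t) - ε * S + ε^2 * Cst) :=
          le_trans hA (by linarith)
        nlinarith
      by_contra hcon
      push_neg at hcon
      have : S ≤ T := by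
        refine le_of_forall_pos_le_add fun ε hε => ?_
        have h1 := hεS (ε / (Cst + 1)) (by positivity)
        have h2 : (ε / (Cst + 1)) * Cst ≤ ε := by
          rw [div_mul_eq_mul_div, div_le_iff₀ (by positivity)]
          nlinarith
        linarith
      linarith
    -- Step 2: separation
    set v : Fin N → EuclideanSpace ℝ (Fin m) :=
      fun t => toE ((enorm m (r t))⁻¹ • r t) with hv
    obtain ⟨β, hβn, hβeq⟩ := sep_lemma x I v (by
      intro d
      have hDx : ∀ t : Fin N, (fun i => ∑ j, d (i, j) * x t j)
          = (Matrix.of fun i j => d (i, j)) *ᵥ x t := by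
        intro t; funext i
        simp [Matrix.mulVec, dotProduct]
      simp only [hDx]
      have e1 : ∀ t, (inner ℝ (v t) (toE ((Matrix.of fun i j => d (i, j)) *ᵥ x t)) : ℝ)
          = ∑ i, ((enorm m (r t))⁻¹ • r t) i * ((Matrix.of fun i j => d (i, j)) *ᵥ x t) i := by
        intro t
        rw [hv, ← dot_eq_inner]
      have e2 : ∀ t, ‖toE ((Matrix.of fun i j => d (i, j)) *ᵥ x t)‖
          = enorm m ((Matrix.of fun i j => d (i, j)) *ᵥ x t) := by
        intro t; rw [enorm_eq_norm]
      calc ∑ t ∈ Iᶜ, (inner ℝ (v t) (toE ((Matrix.of fun i j => d (i, j)) *ᵥ x t)) : ℝ)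
          = ∑ t ∈ Iᶜ, ∑ i, ((enorm m (r t))⁻¹ • r t) i
              * ((Matrix.of fun i j => d (i, j)) *ᵥ x t) i :=
            Finset.sum_congr rfl fun t _ => e1 t
        _ ≤ ∑ t ∈ I, enorm m ((Matrix.of fun i j => d (i, j)) *ᵥ x t) := KI _
        _ = ∑ t ∈ I, ‖toE ((Matrix.of fun i j => d (i, j)) *ᵥ x t)‖ :=
            Finset.sum_congr rfl fun t _ => (e2 t).symm)
    refine ⟨fun t i => β t i, fun t _ => ?_, ?_⟩
    · have h1 : enorm m (fun i => β t i) = ‖β t‖ := enorm_eq_norm _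
      rw [h1]; exact hβn t
    · ext i j
      have h2 := hβeq i j
      simp only [hv, toE_apply, Pi.smul_apply, smul_eq_mul] at h2
      simp only [Matrix.add_apply, Matrix.sum_apply, Matrix.vecMulVec_apply,
        Pi.smul_apply, smul_eq_mul, Matrix.zero_apply]
      linarith
  · rintro ⟨β, hβ, hsum⟩ A
    set C : Matrix (Fin m) (Fin n) ℝ := As - A with hC
    have hsub : ∀ t, y t - A *ᵥ x t = r t + C *ᵥ x t := by
      intro t
      rw [hr, hC, Matrix.sub_mulVec]
      beta_reduce
      abel
    set g : Fin N → Fin m → ℝ :=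
      fun t => if t ∈ I then β t else (enorm m (r t))⁻¹ • r t with hg
    have hper : ∀ t, enorm m (r t) + ∑ i, g t i * (C *ᵥ x t) i ≤ enorm m (y t - A *ᵥ x t) := by
      intro t
      rw [hsub t]
      by_cases ht : t ∈ I
      · have hrt : r t = 0 := (hrI t).mp ht
        have e0 : g t = β t := by simp [hg, ht]
        rw [hrt, e0, enorm_zero', zero_add, zero_add]
        exact bound1 _ _ (hβ t ht)
      · have hrt : r t ≠ 0 := fun hh => ht ((hrI t).mpr hh)
        have e0 : g t = (enorm m (r t))⁻¹ • r t := by simp [hg, ht]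
        rw [e0]
        exact bound2 _ _ hrt
    have hzero : ∑ t : Fin N, ∑ i, g t i * (C *ᵥ x t) i = 0 := by
      have hent : ∀ i j, (∑ t : Fin N, g t i * x t j) = 0 := by
        intro i j
        have h2 := congrFun (congrFun hsum i) j
        simp only [Matrix.add_apply, Matrix.sum_apply, Matrix.vecMulVec_apply,
          Pi.smul_apply, smul_eq_mul, Matrix.zero_apply] at h2
        rw [← Finset.sum_add_sum_compl I (fun t => g t i * x t j)]
        have eI : ∑ t ∈ I, g t i * x t j = ∑ t ∈ I, β t i * x t j :=
          Finset.sum_congr rfl fun t ht => by simp [hg, ht]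
        have eIc : ∑ t ∈ Iᶜ, g t i * x t j
            = ∑ t ∈ Iᶜ, (enorm m (r t))⁻¹ * r t i * x t j := by
          refine Finset.sum_congr rfl fun t ht => ?_
          have ht' : t ∉ I := Finset.mem_compl.mp ht
          simp [hg, ht']
        rw [eI, eIc]
        linarith
      have swap : ∑ t : Fin N, ∑ i, g t i * (C *ᵥ x t) i
          = ∑ i, ∑ j, C i j * (∑ t : Fin N, g t i * x t j) := by
        have e1 : ∀ t, ∑ i, g t i * (C *ᵥ x t) i = ∑ i, ∑ j, g t i * (C i j * x t j) := by
          intro t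
          refine Finset.sum_congr rfl fun i _ => ?_
          rw [Matrix.mulVec, dotProduct, Finset.mul_sum]
        simp_rw [e1]
        rw [Finset.sum_comm]
        refine Finset.sum_congr rfl fun i _ => ?_
        rw [Finset.sum_comm]
        refine Finset.sum_congr rfl fun j _ => ?_
        rw [Finset.mul_sum]
        refine Finset.sum_congr rfl fun t _ => by ring
      rw [swap]
      refine Finset.sum_eq_zero fun i _ => Finset.sum_eq_zero fun j _ => ?_
      rw [hent i j, mul_zero]
    have hsum2 : ∑ t : Fin N, (enorm m (r t) + ∑ i, g t i * (C *ᵥ x t) i)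
        ≤ ∑ t, enorm m (y t - A *ᵥ x t) :=
      Finset.sum_le_sum fun t _ => hper t
    rw [Finset.sum_add_distrib, hzero] at hsum2
    linarith
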